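/- arXiv:1208.3791 — 4 statements merged into one kernel-verified Lean document; each statement's English description precedes it below -/
import Mathlib

section
/- Fix 0 < α < 1, C > 0, and β ≥ max{1, 6/(C·α·(1−α))}. Define p(x) = C·x^α − β·ln(1+x) for x ≥ 0 and q(x) = p(x)/x for x > 0. Then p is monotone increasing and q is monotone decreasing on the interval [K, ∞), where K = (β²/(C·α·(1−α)))^(1/α). -/
open Real

lemma cube_le_three_exp {x : ℝ} (hx : 0 ≤ x) : x ^ 3 ≤ 3 * Real.exp x := by
  have h := Real.sum_le_exp_of_nonneg hx 5
  simp [Finset.sum_range_succ] at h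
  norm_num [Nat.factorial] at h
  nlinarith [sq_nonneg x, sq_nonneg (x - 2), mul_nonneg (mul_nonneg hx hx) hx,
    sq_nonneg (x*(x-2))]

lemma three_log_le {x : ℝ} (hx : 1 ≤ x) : 3 * Real.log x ≤ x + Real.log 3 := by
  have h0 : (0:ℝ) < x := by linarith
  have h := cube_le_three_exp (le_trans zero_le_one hx)
  have h2 := Real.log_le_log (by positivity) h
  rw [Real.log_pow, Real.log_mul (by norm_num) (Real.exp_ne_zero x), Real.log_exp] at h2
  push_cast at h2
  linarith

lemma hasDerivAux (c β α : ℝ) {x : ℝ} (hx : 0 < x) :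
    HasDerivAt (fun y : ℝ => c * y ^ α - β * Real.log (1 + y))
      (c * (α * x ^ (α - 1)) - β * ((1 + x)⁻¹)) x := by
  have h1 : HasDerivAt (fun y : ℝ => y ^ α) (α * x ^ (α - 1)) x :=
    Real.hasDerivAt_rpow_const (Or.inl hx.ne')
  have hi : HasDerivAt (fun y : ℝ => 1 + y) 1 x := (hasDerivAt_id x).const_add 1
  have h2 : HasDerivAt (fun y : ℝ => Real.log (1 + y)) ((1 + x)⁻¹) x := by
    simpa [Function.comp_def] using (Real.hasDerivAt_log (by positivity : (0:ℝ) < 1 + x).ne').comp x hi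
  exact (h1.const_mul c).sub (h2.const_mul β)

lemma mono_aux {c β α K : ℝ} (hα0 : 0 < α) (hc : 0 < c)
    (hβ0 : 0 ≤ β) (hK : 0 < K) (hKey : β ≤ c * α * K ^ α) :
    MonotoneOn (fun x : ℝ => c * x ^ α - β * Real.log (1 + x)) (Set.Ici K) := by
  apply monotoneOn_of_deriv_nonneg (convex_Ici K)
  · intro x hx
    exact (hasDerivAux c β α (lt_of_lt_of_le hK hx)).continuousAt.continuousWithinAt
  · rw [interior_Ici]
    intro x hx
    exact (hasDerivAux c β α (hK.trans hx)).differentiableAt.differentiableWithinAt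
  · rw [interior_Ici]
    intro x hx
    have hx0 : 0 < x := hK.trans hx
    rw [(hasDerivAux c β α hx0).deriv]
    have hxa : K ^ α ≤ x ^ α := Real.rpow_le_rpow hK.le hx.le hα0.le
    have hca : 0 < c * α := mul_pos hc hα0
    have hkey2 : β ≤ c * α * x ^ α := le_trans hKey (by nlinarith)
    have h1x : (0:ℝ) < 1 + x := by linarith
    have hpow : x ^ (α - 1) = x ^ α / x := by
      rw [Real.rpow_sub hx0, Real.rpow_one]
    rw [sub_nonneg, hpow]
    have key : β * x ≤ (c * α * x ^ α) * (1 + x) := by nlinarith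
    calc β * (1 + x)⁻¹ = β / (1 + x) := by ring
      _ ≤ (c * α * x ^ α) / x := by
          rw [div_le_div_iff₀ h1x hx0]; linarith
      _ = c * (α * (x ^ α / x)) := by ring

theorem stmt_4 (α C β : ℝ) (hα0 : 0 < α) (hα1 : α < 1) (hC : 0 < C)
    (hβ : max 1 (6 / (C * α * (1 - α))) ≤ β)
    (p q : ℝ → ℝ)
    (hp : ∀ x, p x = C * x ^ α - β * Real.log (1 + x))
    (hq : ∀ x, q x = p x / x)
    (K : ℝ) (hK : K = (β ^ 2 / (C * α * (1 - α))) ^ (1 / α)) :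
    MonotoneOn p (Set.Ici K) ∧ AntitoneOn q (Set.Ici K) := by
  have hpf : p = fun x => C * x ^ α - β * Real.log (1 + x) := funext hp
  subst hpf
  have hqf : q = fun x => (C * x ^ α - β * Real.log (1 + x)) / x := funext hq
  subst hqf
  have h1α : (0:ℝ) < 1 - α := by linarith
  have hD : 0 < C * α * (1 - α) := by positivity
  have hβ1 : 1 ≤ β := le_trans (le_max_left _ _) hβ
  have hβ0 : (0:ℝ) ≤ β := by linarith
  have hβD : 6 ≤ β * (C * α * (1 - α)) := by
    have := le_trans (le_max_right _ _) hβ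
    rw [div_le_iff₀ hD] at this; exact this
  have hBD : 0 < β ^ 2 / (C * α * (1 - α)) := by positivity
  have hK0 : 0 < K := by rw [hK]; positivity
  have hKα : K ^ α = β ^ 2 / (C * α * (1 - α)) := by
    rw [hK, ← Real.rpow_mul hBD.le, one_div_mul_cancel hα0.ne', Real.rpow_one]
  -- key bound on log (1 + K)
  have hlog : Real.log (1 + K) ≤ β / α := by
    rw [le_div_iff₀ hα0]
    rcases le_or_gt K 1 with hKle | hKgt
    · have la : Real.log (1 + K) ≤ Real.log 2 :=
        Real.log_le_log (by positivity) (by linarith)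
      have lb : Real.log 2 ≤ 1 := by
        have := Real.log_le_sub_one_of_pos (by norm_num : (0:ℝ) < 2); linarith
      have lc : 0 ≤ Real.log (1 + K) := Real.log_nonneg (by linarith)
      nlinarith
    · have l1 : Real.log (1 + K) ≤ Real.log (2 * K) :=
        Real.log_le_log (by positivity) (by linarith)
      rw [Real.log_mul two_ne_zero hK0.ne'] at l1
      have s : α * Real.log K = Real.log (β ^ 2 / (C * α * (1 - α))) := by
        rw [hK, Real.log_rpow hBD]; field_simp
      have lup : Real.log (β ^ 2 / (C * α * (1 - α))) ≤ Real.log (β ^ 3 / 6) := by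
        apply Real.log_le_log hBD
        rw [div_le_div_iff₀ hD (by norm_num : (0:ℝ) < 6)]
        nlinarith
      have l3 : Real.log (β ^ 3 / 6) = 3 * Real.log β - Real.log 6 := by
        rw [Real.log_div (by positivity) (by norm_num), Real.log_pow]
        push_cast; ring
      have l4 : 3 * Real.log β ≤ β + Real.log 3 := three_log_le hβ1
      have l6 : Real.log 6 = Real.log 2 + Real.log 3 := by
        rw [← Real.log_mul two_ne_zero (by norm_num)]; norm_num
      have l2pos : 0 ≤ Real.log 2 := Real.log_nonneg one_le_two
      have e1 : Real.log (1 + K) * α ≤ (Real.log 2 + Real.log K) * α :=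
        mul_le_mul_of_nonneg_right l1 hα0.le
      have e2 : (Real.log 2 + Real.log K) * α
          = Real.log 2 * α + Real.log (β ^ 2 / (C * α * (1 - α))) := by
        rw [add_mul, mul_comm (Real.log K) α, s]
      have e3 : Real.log 2 * α ≤ Real.log 2 := by nlinarith
      linarith
  -- monotonicity of p
  have hmp : MonotoneOn (fun x : ℝ => C * x ^ α - β * Real.log (1 + x)) (Set.Ici K) := by
    apply mono_aux hα0 hC hβ0 hK0
    have : C * α * K ^ α = β ^ 2 / (1 - α) := by
      rw [hKα]; field_simp
    rw [this, le_div_iff₀ h1α]; nlinarith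
  refine ⟨hmp, ?_⟩
  -- antitonicity of q
  have hmh : MonotoneOn (fun x : ℝ => (C * (1 - α)) * x ^ α - β * Real.log (1 + x))
      (Set.Ici K) := by
    apply mono_aux hα0 (by positivity) hβ0 hK0
    have : (C * (1 - α)) * α * K ^ α = β ^ 2 := by
      rw [hKα]; field_simp
    rw [this]; nlinarith
  have hhK : 0 ≤ (C * (1 - α)) * K ^ α - β * Real.log (1 + K) := by
    have h1 : (C * (1 - α)) * K ^ α = β ^ 2 / α := by
      rw [hKα]; field_simp
    have h2 : β * Real.log (1 + K) ≤ β * (β / α) :=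
      mul_le_mul_of_nonneg_left hlog hβ0
    have h3 : β * (β / α) = β ^ 2 / α := by ring
    linarith
  have hhx : ∀ x, K ≤ x → β * Real.log (1 + x) ≤ C * (1 - α) * x ^ α := by
    intro x hx
    have := hmh (Set.self_mem_Ici) (Set.mem_Ici.mpr hx) hx
    simp only at this
    linarith
  -- derivative of q
  have hderq : ∀ x : ℝ, 0 < x →
      HasDerivAt (fun y : ℝ => (C * y ^ α - β * Real.log (1 + y)) / y)
        (((C * (α * x ^ (α - 1)) - β * ((1 + x)⁻¹)) * x
          - (C * x ^ α - β * Real.log (1 + x)) * 1) / x ^ 2) x := by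
    intro x hx
    exact (hasDerivAux C β α hx).div (hasDerivAt_id x) hx.ne'
  apply antitoneOn_of_deriv_nonpos (convex_Ici K)
  · intro x hx
    exact (hderq x (lt_of_lt_of_le hK0 hx)).continuousAt.continuousWithinAt
  · rw [interior_Ici]
    intro x hx
    exact (hderq x (hK0.trans hx)).differentiableAt.differentiableWithinAt
  · rw [interior_Ici]
    intro x hx
    have hx0 : 0 < x := hK0.trans hx
    rw [(hderq x hx0).deriv]
    apply div_nonpos_of_nonpos_of_nonneg _ (by positivity)
    have hpow : x ^ (α - 1) * x = x ^ α := by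
      rw [Real.rpow_sub hx0, Real.rpow_one]; field_simp
    have hfrac : 0 ≤ β * ((1 + x)⁻¹ * x) := by positivity
    have hlx := hhx x hx.le
    nlinarith [hlx, hfrac, hpow]
end

section
/- Fix 0 < α < 1, C > 0, β ≥ max{1, 6/(C·α·(1−α))}, and let p(x) = C·x^α − β·ln(1+x), q(x) = p(x)/x, K = (β²/(Cα(1−α)))^(1/α). Let G be a group with a subadditive symmetric length function τ : G → ℕ (τ(xy) ≤ τ(x)+τ(y), τ(x⁻¹)=τ(x), τ(e)=0), and define ω(x) = exp(p(τ(x))). If x, y ∈ G satisfy min{τ(x), τ(y), τ(xy)} > K, then ω(xy) ≤ ω(x)·ω(y). -/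
open Real

private lemma log_tangent {u c : ℝ} (hu : 0 < u) (hc : 0 < c) :
    Real.log u ≤ u / c + Real.log c - 1 := by
  have h := Real.log_le_sub_one_of_pos (div_pos hu hc)
  rw [Real.log_div (ne_of_gt hu) (ne_of_gt hc)] at h
  linarith

set_option maxHeartbeats 1000000 in
/-- Abstract arithmetic core of the pointwise claim. -/
private lemma claim_core (α β D u P : ℝ) (hα0 : 0 < α) (hα1 : α < 1)
    (hD0 : 0 < D) (hβ1 : 1 ≤ β) (hβ6 : 6 ≤ D * β)
    (hu1 : 1 ≤ u) (huD : β ^ 2 ≤ D * u)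
    (hP : α * P ≤ α * Real.log 2 + Real.log u) :
    α * (β * P) ≤ D * u := by
  have hβ0 : 0 < β := by linarith
  have hu0 : 0 < u := by linarith
  have hc0 : (0:ℝ) < 2 * β / D := by positivity
  have h2 : β * Real.log u ≤ u * D / 2 + β * Real.log (2 * β / D) - β := by
    have ht := log_tangent hu0 hc0
    have he : β * (u / (2 * β / D)) = u * D / 2 := by
      field_simp
    nlinarith [mul_le_mul_of_nonneg_left ht hβ0.le, he]
  have h3 : Real.log (2 * β / D) ≤ 2 * Real.log β - Real.log 3 := by
    have hle : 2 * β / D ≤ β ^ 2 / 3 := by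
      rw [div_le_div_iff₀ hD0 (by norm_num)]
      nlinarith [hβ6, hβ1]
    have hlog := Real.log_le_log hc0 hle
    rw [Real.log_div (by positivity : (β:ℝ) ^ 2 ≠ 0) (by norm_num), Real.log_pow] at hlog
    push_cast at hlog
    linarith
  have h4 : Real.log β ≤ β / 4 + 2 * Real.log 2 - 1 := by
    have := log_tangent hβ0 (by norm_num : (0:ℝ) < 4)
    have h4' : Real.log 4 = 2 * Real.log 2 := by
      rw [show (4:ℝ) = 2 ^ 2 by norm_num, Real.log_pow]
      push_cast; ring
    linarith
  have h5 : Real.log 2 ≤ 0.6932 := le_of_lt (by linarith [Real.log_two_lt_d9])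
  have h6 : (1:ℝ) ≤ Real.log 3 := by
    rw [Real.le_log_iff_exp_le (by norm_num)]
    linarith [Real.exp_one_lt_d9]
  have hl2 : (0:ℝ) ≤ Real.log 2 := Real.log_nonneg (by norm_num)
  have m1 : β * (α * P) ≤ α * β * Real.log 2 + β * Real.log u := by
    nlinarith [mul_le_mul_of_nonneg_left hP hβ0.le]
  have m3 : β * Real.log (2 * β / D) ≤ 2 * (β * Real.log β) - β * Real.log 3 := by
    nlinarith [mul_le_mul_of_nonneg_left h3 hβ0.le]
  have m4 : β * Real.log β ≤ β ^ 2 / 4 + 2 * (β * Real.log 2) - β := by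
    nlinarith [mul_le_mul_of_nonneg_left h4 hβ0.le]
  have m6 : α * β * Real.log 2 ≤ β * Real.log 2 := by
    have h := mul_le_mul_of_nonneg_right
      (mul_le_mul_of_nonneg_right hα1.le hβ0.le) hl2
    linarith [h]
  have m7 : β * Real.log 2 ≤ 0.6932 * β := by
    have h := mul_le_mul_of_nonneg_left h5 hβ0.le
    linarith [h]
  have m8 : β ≤ β * Real.log 3 := by
    have h := mul_le_mul_of_nonneg_left h6 hβ0.le
    linarith [h]
  nlinarith [m1, h2, m3, m4, m6, m7, m8, huD, hβ0.le]

/-- The pointwise claim: `β log(1+a) ≤ C (1-α) a^α` for `a ≥ 1` with `a^α ≥ β²/D`. -/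
private lemma claim_pt (α C β a : ℝ) (hα0 : 0 < α) (hα1 : α < 1) (hC : 0 < C)
    (hβ1 : 1 ≤ β) (hβ6 : 6 / (C * α * (1 - α)) ≤ β)
    (ha1 : 1 ≤ a) (hau : β ^ 2 / (C * α * (1 - α)) ≤ a ^ α) :
    β * Real.log (1 + a) ≤ C * (1 - α) * a ^ α := by
  have hD0 : 0 < C * α * (1 - α) := by
    have : 0 < 1 - α := by linarith
    positivity
  have ha0 : 0 < a := by linarith
  have hu1 : 1 ≤ a ^ α := Real.one_le_rpow ha1 hα0.le
  have huD : β ^ 2 ≤ (C * α * (1 - α)) * a ^ α := by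
    rw [div_le_iff₀ hD0] at hau
    linarith
  have hβ6' : 6 ≤ (C * α * (1 - α)) * β := by
    rw [div_le_iff₀ hD0] at hβ6
    linarith
  have hP : α * Real.log (1 + a) ≤ α * Real.log 2 + Real.log (a ^ α) := by
    have h1 : Real.log (1 + a) ≤ Real.log 2 + Real.log a := by
      have h := Real.log_le_log (by linarith : (0:ℝ) < 1 + a) (by linarith : 1 + a ≤ 2 * a)
      rwa [Real.log_mul (by norm_num) (ne_of_gt ha0)] at h
    rw [Real.log_rpow ha0]
    nlinarith [mul_le_mul_of_nonneg_left h1 hα0.le, hα0.le,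
      Real.log_nonneg (by norm_num : (1:ℝ) ≤ 2)]
  have hmain := claim_core α β (C * α * (1 - α)) (a ^ α) (Real.log (1 + a))
    hα0 hα1 hD0 hβ1 hβ6' hu1 huD hP
  have hCa : C * (1 - α) * a ^ α = (C * α * (1 - α)) * a ^ α / α := by
    field_simp
  rw [hCa, le_div_iff₀ hα0]
  linarith [hmain]

/-- Monotonicity of `p` on `[K, ∞)`. -/
private lemma p_mono (α C β K : ℝ) (hα0 : 0 < α) (hα1 : α < 1) (hC : 0 < C)
    (hβ1 : 1 ≤ β) (hK0 : 0 < K)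
    (hKα : β ^ 2 / (C * α * (1 - α)) ≤ K ^ α) :
    MonotoneOn (fun x : ℝ => C * x ^ α - β * Real.log (1 + x)) (Set.Ici K) := by
  have hD0 : 0 < C * α * (1 - α) := by
    have : 0 < 1 - α := by linarith
    positivity
  have hβ0 : 0 < β := by linarith
  apply monotoneOn_of_deriv_nonneg (convex_Ici K)
  · apply ContinuousOn.sub
    · exact continuousOn_const.mul
        (ContinuousOn.rpow_const continuousOn_id (fun x _ => Or.inr hα0.le))
    · apply continuousOn_const.mul
      apply ContinuousOn.log (by fun_prop)
      intro x hx
      have hx' : K ≤ x := hx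
      intro h
      have : x = -1 := by linarith
      linarith [hK0, hx', this]
  · rw [interior_Ici]
    intro x hx
    have hx0 : 0 < x := lt_trans hK0 hx
    have hd1 : HasDerivAt (fun y : ℝ => C * y ^ α) (C * (α * x ^ (α - 1))) x :=
      (Real.hasDerivAt_rpow_const (Or.inl hx0.ne')).const_mul C
    have hd2 : HasDerivAt (fun y : ℝ => Real.log (1 + y)) (1 / (1 + x)) x := by
      have h := ((hasDerivAt_id x).const_add 1).log
        (ne_of_gt (by linarith : (0:ℝ) < 1 + x))
      simpa using h
    exact ((hd1.sub (hd2.const_mul β)).differentiableAt).differentiableWithinAt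
  · rw [interior_Ici]
    intro x hx
    have hx0 : 0 < x := lt_trans hK0 hx
    have hd1 : HasDerivAt (fun y : ℝ => C * y ^ α) (C * (α * x ^ (α - 1))) x :=
      (Real.hasDerivAt_rpow_const (Or.inl hx0.ne')).const_mul C
    have hd2 : HasDerivAt (fun y : ℝ => Real.log (1 + y)) (1 / (1 + x)) x := by
      have h := ((hasDerivAt_id x).const_add 1).log
        (ne_of_gt (by linarith : (0:ℝ) < 1 + x))
      simpa using h
    have hd : HasDerivAt (fun y : ℝ => C * y ^ α - β * Real.log (1 + y))
        (C * (α * x ^ (α - 1)) - β * (1 / (1 + x))) x := hd1.sub (hd2.const_mul β)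
    rw [hd.deriv]
    have h1x : (0:ℝ) < 1 + x := by linarith
    have e1 : x ^ (α - 1) * x = x ^ α := by
      rw [← Real.rpow_add_one hx0.ne' (α - 1)]
      norm_num
    have hxα : K ^ α ≤ x ^ α := Real.rpow_le_rpow hK0.le hx.le hα0.le
    have hxu : β ^ 2 ≤ C * α * (1 - α) * x ^ α := by
      rw [div_le_iff₀ hD0] at hKα
      nlinarith [hKα, hxα, hD0]
    have hxa0 : 0 ≤ x ^ α := Real.rpow_nonneg hx0.le α
    have hβx : β ≤ C * α * x ^ α := by
      nlinarith [hxu, hβ1, hxa0, mul_nonneg (mul_nonneg (mul_pos hC hα0).le hα0.le) hxa0,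
        mul_nonneg (by linarith : (0:ℝ) ≤ β) (by linarith : (0:ℝ) ≤ β - 1)]
    have hpow0 : 0 ≤ x ^ (α - 1) := Real.rpow_nonneg hx0.le _
    have e2 : C * α * (x ^ (α - 1) * x) = C * α * x ^ α := by rw [e1]
    rw [sub_nonneg, mul_one_div, div_le_iff₀ h1x]
    nlinarith [hβx, e2, mul_nonneg (mul_pos hC hα0).le hpow0]

/-- The key inequality on reals. -/
private lemma key_ineq (α C β K a b t : ℝ) (hα0 : 0 < α) (hα1 : α < 1) (hC : 0 < C)
    (hβ1 : 1 ≤ β) (hβ6 : 6 / (C * α * (1 - α)) ≤ β)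
    (hK : K = (β ^ 2 / (C * α * (1 - α))) ^ (1 / α))
    (hab : a ≤ b) (ha1 : 1 ≤ a) (haK : K < a) (hbK : K < b) (htK : K < t)
    (htab : t ≤ a + b) :
    C * t ^ α - β * Real.log (1 + t) ≤
      (C * a ^ α - β * Real.log (1 + a)) + (C * b ^ α - β * Real.log (1 + b)) := by
  have hD0 : 0 < C * α * (1 - α) := by
    have : 0 < 1 - α := by linarith
    positivity
  have hβ0 : 0 < β := by linarith
  have hK0 : 0 < K := by
    rw [hK]; positivity
  have hKα : K ^ α = β ^ 2 / (C * α * (1 - α)) := by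
    rw [hK, ← Real.rpow_mul (by positivity), one_div, inv_mul_cancel₀ hα0.ne', Real.rpow_one]
  have ha0 : 0 < a := by linarith
  have hb0 : 0 < b := by linarith
  have hmono := p_mono α C β K hα0 hα1 hC hβ1 hK0 (le_of_eq hKα.symm)
  have stepA : C * t ^ α - β * Real.log (1 + t) ≤
      C * (a + b) ^ α - β * Real.log (1 + (a + b)) :=
    hmono (Set.mem_Ici.mpr htK.le) (Set.mem_Ici.mpr (by linarith)) htab
  have stepB1 : (a + b) ^ α ≤ b ^ α + α * a ^ α := by
    have hs0 : (0:ℝ) ≤ a / b := by positivity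
    have hsum : a + b = b * (1 + a / b) := by field_simp; ring
    have hmul : (a + b) ^ α = b ^ α * (1 + a / b) ^ α := by
      rw [hsum, Real.mul_rpow hb0.le (by linarith)]
    have hbern : (1 + a / b) ^ α ≤ 1 + α * (a / b) :=
      rpow_one_add_le_one_add_mul_self (by linarith) hα0.le hα1.le
    have hba : b ^ α * (a / b) = a * b ^ (α - 1) := by
      rw [Real.rpow_sub_one hb0.ne' α]
      field_simp
    have hanti : b ^ (α - 1) ≤ a ^ (α - 1) :=
      Real.rpow_le_rpow_of_nonpos ha0 hab (by linarith)
    have haa : a * a ^ (α - 1) = a ^ α := by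
      rw [Real.rpow_sub_one ha0.ne' α]
      field_simp
    have hbpos : 0 ≤ b ^ α := Real.rpow_nonneg hb0.le α
    calc (a + b) ^ α = b ^ α * (1 + a / b) ^ α := hmul
      _ ≤ b ^ α * (1 + α * (a / b)) := mul_le_mul_of_nonneg_left hbern hbpos
      _ = b ^ α + α * (a * b ^ (α - 1)) := by rw [mul_add, mul_one, mul_comm α (a/b), ← mul_assoc, hba]; ring
      _ ≤ b ^ α + α * (a * a ^ (α - 1)) := by
          nlinarith [mul_le_mul_of_nonneg_left hanti ha0.le, hα0.le]
      _ = b ^ α + α * a ^ α := by rw [haa]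
  have stepB2 : Real.log (1 + b) ≤ Real.log (1 + (a + b)) :=
    Real.log_le_log (by linarith) (by linarith)
  have hau : β ^ 2 / (C * α * (1 - α)) ≤ a ^ α := by
    rw [← hKα]
    exact Real.rpow_le_rpow hK0.le haK.le hα0.le
  have hclaim := claim_pt α C β a hα0 hα1 hC hβ1 hβ6 ha1 hau
  have stepB : C * (a + b) ^ α - β * Real.log (1 + (a + b)) ≤
      (C * a ^ α - β * Real.log (1 + a)) + (C * b ^ α - β * Real.log (1 + b)) := by
    nlinarith [mul_le_mul_of_nonneg_left stepB1 hC.le,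
      mul_le_mul_of_nonneg_left stepB2 hβ0.le, hclaim]
  linarith [stepA, stepB]

theorem stmt_7 (α C β : ℝ) (hα0 : 0 < α) (hα1 : α < 1) (hC : 0 < C)
    (hβ : max 1 (6 / (C * α * (1 - α))) ≤ β)
    (p q : ℝ → ℝ)
    (hp : ∀ x, p x = C * x ^ α - β * Real.log (1 + x))
    (hq : ∀ x, q x = p x / x)
    (K : ℝ) (hK : K = (β ^ 2 / (C * α * (1 - α))) ^ (1 / α))
    {G : Type*} [Group G] (τ : G → ℕ)
    (hsub : ∀ x y, τ (x * y) ≤ τ x + τ y)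
    (hsymm : ∀ x, τ x⁻¹ = τ x) (he : τ 1 = 0)
    (ω : G → ℝ) (hω : ∀ x, ω x = Real.exp (p (τ x)))
    (x y : G) (hx : K < τ x) (hy : K < τ y) (hxy : K < τ (x * y)) :
    ω (x * y) ≤ ω x * ω y := by
  have hβ1 : (1:ℝ) ≤ β := le_trans (le_max_left _ _) hβ
  have hβ6 : 6 / (C * α * (1 - α)) ≤ β := le_trans (le_max_right _ _) hβ
  have hK0 : 0 < K := by
    rw [hK]
    have hD0 : 0 < C * α * (1 - α) := by
      have : 0 < 1 - α := by linarith
      positivity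
    positivity
  have h1 : ∀ z : G, K < τ z → (1:ℝ) ≤ (τ z : ℝ) := by
    intro z hz
    have h0 : 0 < (τ z : ℝ) := lt_trans hK0 hz
    have : 0 < τ z := by exact_mod_cast h0
    exact_mod_cast Nat.one_le_iff_ne_zero.mpr (Nat.pos_iff_ne_zero.mp this)
  have hsum : ((τ (x * y) : ℝ)) ≤ (τ x : ℝ) + (τ y : ℝ) := by
    exact_mod_cast hsub x y
  rw [hω, hω, hω, ← Real.exp_add, Real.exp_le_exp, hp, hp, hp]
  rcases le_total ((τ x : ℝ)) ((τ y : ℝ)) with hle | hle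
  · exact key_ineq α C β K (τ x) (τ y) (τ (x * y)) hα0 hα1 hC hβ1 hβ6 hK
      hle (h1 x hx) hx hy hxy hsum
  · have := key_ineq α C β K (τ y) (τ x) (τ (x * y)) hα0 hα1 hC hβ1 hβ6 hK
      hle (h1 y hy) hy hx hxy (by linarith)
    linarith
end

section
/- Fix 0 < α < 1, C > 0, β ≥ max{1, 6/(C·α·(1−α))}, p(x) = C·x^α − β·ln(1+x), K = (β²/(Cα(1−α)))^(1/α). Let G be a group with a subadditive symmetric integer-valued length function τ with τ(e)=0, and ω(x) = exp(p(τ(x))). Set M = max{ exp(p(t) − p(s) − p(r)) : t, s, r ∈ [0, 4K] ∩ ℤ≥0 }. Then ω(xy) ≤ M·ω(x)·ω(y) for all x, y ∈ G. -/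
open Real

open Set in
private lemma concave_incr' {f : ℝ → ℝ} {S : Set ℝ} (hf : ConcaveOn ℝ S f)
    {a b h : ℝ} (ha : a ∈ S) (hb : b ∈ S) (hah : a + h ∈ S) (hbh : b + h ∈ S)
    (hab : a ≤ b) (hh : 0 ≤ h) :
    f (b + h) - f b ≤ f (a + h) - f a := by
  rcases eq_or_lt_of_le (by linarith : a ≤ b + h) with heq | hlt
  · have h0 : h = 0 := by linarith
    have hab' : a = b := by linarith
    simp [h0, hab']
  · set T := b + h - a with hT
    have hT0 : 0 < T := by simp only [hT]; linarith
    have hl1 : 0 ≤ h / T := by positivity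
    have hl2 : 0 ≤ (b - a) / T := div_nonneg (by linarith) hT0.le
    have hsum : h / T + (b - a) / T = 1 := by field_simp; simp only [hT]; ring
    have h1 := hf.2 ha hbh hl1 hl2 hsum
    have h2 := hf.2 ha hbh hl2 hl1 (by linarith)
    rw [smul_eq_mul, smul_eq_mul, smul_eq_mul, smul_eq_mul] at h1 h2
    have e1 : h / T * a + (b - a) / T * (b + h) = b := by field_simp; ring
    have e2 : (b - a) / T * a + h / T * (b + h) = a + h := by field_simp; ring
    rw [e1] at h1
    rw [e2] at h2
    have e3 : h / T * f a + (b - a) / T * f a = f a := by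
      rw [← add_mul, hsum, one_mul]
    have e4 : h / T * f (b + h) + (b - a) / T * f (b + h) = f (b + h) := by
      rw [← add_mul, hsum, one_mul]
    linarith

set_option maxHeartbeats 2000000 in
open Set in
theorem stmt_8 (α C β : ℝ) (hα0 : 0 < α) (hα1 : α < 1) (hC : 0 < C)
    (hβ : max 1 (6 / (C * α * (1 - α))) ≤ β)
    (p : ℝ → ℝ)
    (hp : ∀ x, p x = C * x ^ α - β * Real.log (1 + x))
    (K : ℝ) (hK : K = (β ^ 2 / (C * α * (1 - α))) ^ (1 / α))
    {G : Type*} [Group G] (τ : G → ℕ)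
    (hsub : ∀ x y, τ (x * y) ≤ τ x + τ y)
    (hsymm : ∀ x, τ x⁻¹ = τ x) (he : τ 1 = 0)
    (ω : G → ℝ) (hω : ∀ x, ω x = Real.exp (p (τ x)))
    (M : ℝ)
    (hM : IsGreatest {m : ℝ | ∃ t s r : ℕ, (t : ℝ) ≤ 4 * K ∧ (s : ℝ) ≤ 4 * K ∧
      (r : ℝ) ≤ 4 * K ∧ m = Real.exp (p t - p s - p r)} M) :
    ∀ x y : G, ω (x * y) ≤ M * ω x * ω y := by
  have hβ1 : 1 ≤ β := le_trans (le_max_left _ _) hβ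
  have hA : 0 < C * α * (1 - α) := mul_pos (mul_pos hC hα0) (by linarith)
  have hβ0 : 0 < β := lt_of_lt_of_le one_pos hβ1
  have hq0 : 0 < β ^ 2 / (C * α * (1 - α)) := by positivity
  have hK0 : 0 < K := by rw [hK]; exact Real.rpow_pos_of_pos hq0 _
  have hKα : K ^ α = β ^ 2 / (C * α * (1 - α)) := by
    rw [hK, ← Real.rpow_mul hq0.le, one_div_mul_cancel (ne_of_gt hα0), Real.rpow_one]
  have h1α : (1:ℝ) - α ≠ 0 := by intro h; rw [sub_eq_zero] at h; linarith
  have hCKα : C * α * K ^ α = β ^ 2 / (1 - α) := by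
    rw [hKα, mul_div_assoc']
    rw [div_eq_div_iff hA.ne' h1α]; ring
  have hpfun : p = fun w : ℝ => C * w ^ α - β * Real.log (1 + w) := funext hp
  have hderiv : ∀ z : ℝ, 0 < z →
      HasDerivAt p (C * α * z ^ (α - 1) - β / (1 + z)) z := by
    intro z hz
    have h1z : (0:ℝ) < 1 + z := by linarith
    have h1 : HasDerivAt (fun w : ℝ => w ^ α) (α * z ^ (α - 1)) z :=
      Real.hasDerivAt_rpow_const (Or.inl hz.ne')
    have h2 : HasDerivAt (fun w : ℝ => 1 + w) 1 z := (hasDerivAt_id z).const_add 1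
    have h3 : HasDerivAt (fun w : ℝ => Real.log (1 + w)) (1 / (1 + z)) z := by
      simpa using h2.log h1z.ne'
    have h4 := (h1.const_mul C).sub (h3.const_mul β)
    rw [hpfun]
    exact h4.congr_deriv (by ring)
  have hderiv2 : ∀ z : ℝ, 0 < z →
      HasDerivAt (fun z => C * α * z ^ (α - 1) - β / (1 + z))
        (C * α * ((α - 1) * z ^ (α - 2)) + β / (1 + z) ^ 2) z := by
    intro z hz
    have h1z : (0:ℝ) < 1 + z := by linarith
    have h1 : HasDerivAt (fun w : ℝ => w ^ (α - 1)) ((α - 1) * z ^ (α - 1 - 1)) z :=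
      Real.hasDerivAt_rpow_const (Or.inl hz.ne')
    have h2 : HasDerivAt (fun w : ℝ => 1 + w) 1 z := (hasDerivAt_id z).const_add 1
    have h3 : HasDerivAt (fun w : ℝ => (1 + w)⁻¹) (-1 / (1 + z) ^ 2) z := by
      exact h2.inv h1z.ne'
    have h4 := (h1.const_mul (C * α)).sub (h3.const_mul β)
    have heq : ∀ w : ℝ, C * α * w ^ (α - 1) - β / (1 + w)
        = C * α * w ^ (α - 1) - β * (1 + w)⁻¹ := by
      intro w; rw [div_eq_mul_inv]
    simp only [heq]
    exact h4.congr_deriv (by ring)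
  have hmono : MonotoneOn p (Ici K) := by
    apply monotoneOn_of_deriv_nonneg (convex_Ici K)
    · intro z hz
      exact (hderiv z (lt_of_lt_of_le hK0 hz)).continuousAt.continuousWithinAt
    · intro z hz
      rw [interior_Ici] at hz
      exact ((hderiv z (hK0.trans hz)).differentiableAt).differentiableWithinAt
    · intro z hz
      rw [interior_Ici] at hz
      have hz0 : 0 < z := hK0.trans hz
      have h1z : (0:ℝ) < 1 + z := by linarith
      rw [(hderiv z hz0).deriv]
      have hzα : K ^ α ≤ z ^ α := Real.rpow_le_rpow hK0.le hz.le hα0.le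
      have hx1 : z ^ (α - 1) * z = z ^ α := by
        have h := (Real.rpow_add hz0 (α - 1) 1).symm
        rw [Real.rpow_one] at h
        rw [h]; norm_num
      have hpos : 0 < z ^ (α - 1) := Real.rpow_pos_of_pos hz0 _
      have hβle : β ≤ C * α * z ^ α := by
        have h1 : β ≤ β ^ 2 / (1 - α) := by
          rw [le_div_iff₀ (by linarith : (0:ℝ) < 1 - α)]; nlinarith
        have h2 : C * α * K ^ α ≤ C * α * z ^ α :=
          mul_le_mul_of_nonneg_left hzα (by positivity)
        rw [hCKα] at h2; linarith
      rw [sub_nonneg, div_le_iff₀ h1z]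
      nlinarith
  have hconc : ConcaveOn ℝ (Ici K) p := by
    apply concaveOn_of_hasDerivWithinAt2_nonpos (convex_Ici K)
      (f' := fun z => C * α * z ^ (α - 1) - β / (1 + z))
      (f'' := fun z => C * α * ((α - 1) * z ^ (α - 2)) + β / (1 + z) ^ 2)
    · intro z hz
      exact (hderiv z (lt_of_lt_of_le hK0 hz)).continuousAt.continuousWithinAt
    · intro z hz
      rw [interior_Ici] at hz
      exact ((hderiv z (hK0.trans hz)).hasDerivWithinAt)
    · intro z hz
      rw [interior_Ici] at hz
      exact ((hderiv2 z (hK0.trans hz)).hasDerivWithinAt)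
    · intro z hz
      rw [interior_Ici] at hz
      have hz0 : 0 < z := hK0.trans hz
      have h1z : (0:ℝ) < 1 + z := by linarith
      have hzα : K ^ α ≤ z ^ α := Real.rpow_le_rpow hK0.le hz.le hα0.le
      have hx2 : z ^ (α - 2) * z ^ (2:ℕ) = z ^ α := by
        have h0 : (z:ℝ) ^ (2:ℕ) = z ^ ((2:ℕ):ℝ) := (Real.rpow_natCast z 2).symm
        rw [h0, ← Real.rpow_add hz0]
        norm_num
      have hpos : 0 < z ^ (α - 2) := Real.rpow_pos_of_pos hz0 _
      have hβ2 : β ^ 2 ≤ C * α * (1 - α) * z ^ α := by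
        have h2 : C * α * (1 - α) * K ^ α = β ^ 2 := by
          rw [hKα]; field_simp
        nlinarith
      have hββ : β ≤ β ^ 2 := by nlinarith
      have hsq : (z:ℝ) ^ (2:ℕ) ≤ (1 + z) ^ (2:ℕ) := by nlinarith
      have key : β / (1 + z) ^ 2 ≤ C * α * (1 - α) * z ^ (α - 2) := by
        rw [div_le_iff₀ (by positivity)]
        have h6 := mul_le_mul_of_nonneg_left hsq (mul_pos hA hpos).le
        nlinarith [hx2]
      nlinarith
  have hp0 : p 0 = 0 := by rw [hp]; simp [Real.zero_rpow (ne_of_gt hα0)]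
  have hM1 : 1 ≤ M := by
    apply hM.2
    refine ⟨0, 0, 0, ?_, ?_, ?_, ?_⟩ <;>
      simp [hp0, hK0.le, le_of_lt hK0]
    all_goals linarith
  have hM0 : 0 < M := lt_of_lt_of_le one_pos hM1
  have hlogM : 0 ≤ Real.log M := Real.log_nonneg hM1
  have hrc : ConcaveOn ℝ (Ici 0) (fun x : ℝ => x ^ α) := Real.concaveOn_rpow hα0.le hα1.le
  have hrincr : ∀ a b h : ℝ, 0 ≤ a → a ≤ b → 0 ≤ h →
      (b + h) ^ α - b ^ α ≤ (a + h) ^ α - a ^ α := by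
    intro a b h ha hab hh
    exact concave_incr' hrc (mem_Ici.mpr ha) (mem_Ici.mpr (by linarith))
      (mem_Ici.mpr (by linarith)) (mem_Ici.mpr (by linarith)) hab hh
  have hmono' : ∀ a b : ℝ, K ≤ a → a ≤ b → p a ≤ p b := fun a b ha hab =>
    hmono (mem_Ici.mpr ha) (mem_Ici.mpr (ha.trans hab)) hab
  have hincr : ∀ a b : ℝ, K ≤ a → a ≤ b → p (b + 1) - p b ≤ p (a + 1) - p a := by
    intro a b ha hab
    exact concave_incr' hconc (mem_Ici.mpr ha) (mem_Ici.mpr (by linarith))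
      (mem_Ici.mpr (by linarith)) (mem_Ici.mpr (by linarith)) hab zero_le_one
  have hfinal : ∀ t s r : ℕ, t ≤ s + r → p t - p s - p r ≤ Real.log M := by
    by_cases hKc : K < 1
    · -- small K case: p is genuinely subadditive on naturals
      have hβ2A : β ^ 2 < C * α * (1 - α) := by
        have h1 : K ^ α < 1 := Real.rpow_lt_one hK0.le hKc hα0
        rw [hKα] at h1
        exact (div_lt_one hA).mp h1
      have hlog_le : ∀ x : ℝ, 0 ≤ x → α * Real.log (1 + x) ≤ x ^ α := by
        intro x hx
        have h1x : (0:ℝ) < 1 + x := by linarith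
        have hsub' : (1 + x) ^ α - 1 ≤ x ^ α := by
          have h := hrincr 0 1 x le_rfl zero_le_one hx
          rw [zero_add, Real.one_rpow, Real.zero_rpow (ne_of_gt hα0)] at h
          linarith
        have hlog1 : Real.log ((1 + x) ^ α) = α * Real.log (1 + x) := Real.log_rpow h1x α
        have h2 : Real.log ((1 + x) ^ α) ≤ (1 + x) ^ α - 1 :=
          Real.log_le_sub_one_of_pos (Real.rpow_pos_of_pos h1x α)
        linarith
      have hCα : β < C * α := by nlinarith
      have hpnn : ∀ x : ℝ, 0 ≤ x → 0 ≤ p x := by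
        intro x hx
        rw [hp]
        have h1 := hlog_le x hx
        have h2 : 0 ≤ Real.log (1 + x) := Real.log_nonneg (by linarith)
        have h3 : 0 ≤ x ^ α := Real.rpow_nonneg hx α
        nlinarith [mul_le_mul_of_nonneg_left h1 hβ0.le]
      have haux : ∀ s r : ℝ, 1 ≤ s → s ≤ r → p (s + r) ≤ p s + p r := by
        intro s r hs hsr
        have hs0 : (0:ℝ) < s := by linarith
        have hr0 : (0:ℝ) < r := by linarith
        have hA1 : (r + s) ^ α - r ^ α ≤ (s + s) ^ α - s ^ α := hrincr s r s hs0.le hsr hs0.le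
        have h2s : (s + s) ^ α = 2 ^ α * s ^ α := by
          rw [show s + s = 2 * s by ring, Real.mul_rpow (by norm_num) hs0.le]
        have h2α : (2:ℝ) ^ α ≤ 1 + α := by
          have hc := convexOn_exp.2 (Set.mem_univ (0:ℝ)) (Set.mem_univ (Real.log 2))
            (by linarith : (0:ℝ) ≤ 1 - α) hα0.le (by ring)
          simp only [smul_eq_mul, mul_zero, zero_add, Real.exp_zero, mul_one] at hc
          rw [Real.exp_log (by norm_num : (0:ℝ) < 2)] at hc
          rw [Real.rpow_def_of_pos (by norm_num : (0:ℝ) < 2)]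
          rw [mul_comm]
          linarith
        have hlogs : α * Real.log (1 + s) ≤ s ^ α := hlog_le s hs0.le
        have hlogmono : Real.log (1 + r) ≤ Real.log (1 + (s + r)) :=
          Real.log_le_log (by linarith) (by linarith)
        have hsα : 0 ≤ s ^ α := Real.rpow_nonneg hs0.le α
        have hβA : β ≤ C * α * (1 - α) := by nlinarith
        have hlogs0 : 0 ≤ Real.log (1 + s) := Real.log_nonneg (by linarith)
        rw [hp, hp, hp]
        have e1 : (s + r) ^ α = (r + s) ^ α := by rw [add_comm]
        have hkey1 : C * (s + r) ^ α - C * s ^ α - C * r ^ α ≤ -(C * (1 - α) * s ^ α) := by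
          have h3 : (s + r) ^ α - s ^ α - r ^ α ≤ (2 ^ α - 2) * s ^ α := by
            rw [e1]; nlinarith
          have h4 : (2:ℝ) ^ α - 2 ≤ -(1 - α) := by linarith
          nlinarith [mul_le_mul_of_nonneg_left h3 hC.le, mul_le_mul_of_nonneg_left h4 (mul_nonneg hC.le hsα)]
        have hkey2 : β * Real.log (1 + s) + β * Real.log (1 + r)
            - β * Real.log (1 + (s + r)) ≤ C * (1 - α) * s ^ α := by
          have h6 : β * Real.log (1 + s) ≤ β / α * s ^ α := by
            rw [div_mul_eq_mul_div, le_div_iff₀ hα0]; nlinarith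
          have h7 : β / α * s ^ α ≤ C * (1 - α) * s ^ α := by
            apply mul_le_mul_of_nonneg_right _ hsα
            rw [div_le_iff₀ hα0]; nlinarith
          nlinarith [mul_le_mul_of_nonneg_left hlogmono hβ0.le]
        linarith
      intro t s r htsr
      have hcast : (t:ℝ) ≤ (s:ℝ) + (r:ℝ) := by exact_mod_cast htsr
      have hstep : p t ≤ p s + p r := by
        rcases Nat.eq_zero_or_pos t with rfl | ht0
        · rw [Nat.cast_zero, hp0]
          have h1 := hpnn s (Nat.cast_nonneg s)
          have h2 := hpnn r (Nat.cast_nonneg r)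
          linarith
        · have h1t : (1:ℝ) ≤ (t:ℝ) := by exact_mod_cast ht0
          have hm1 : p t ≤ p ((s:ℝ) + (r:ℝ)) := hmono' _ _ (by linarith) hcast
          have hm2 : p ((s:ℝ) + (r:ℝ)) ≤ p s + p r := by
            rcases Nat.eq_zero_or_pos s with rfl | hs0
            · simp [hp0]
            rcases Nat.eq_zero_or_pos r with rfl | hr0
            · simp [hp0]
            have h1s : (1:ℝ) ≤ (s:ℝ) := by exact_mod_cast hs0
            have h1r : (1:ℝ) ≤ (r:ℝ) := by exact_mod_cast hr0
            rcases le_total (s:ℝ) (r:ℝ) with h | h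
            · exact haux _ _ h1s h
            · have h9 := haux _ _ h1r h
              rw [add_comm ((r:ℝ)) ((s:ℝ))] at h9
              linarith
          linarith
      linarith
    · push_neg at hKc
      have hK4 : (4:ℝ) ≤ 4 * K := by linarith
      have hbox : ∀ t s r : ℕ, (t:ℝ) ≤ 4*K → (s:ℝ) ≤ 4*K → (r:ℝ) ≤ 4*K →
          p t - p s - p r ≤ Real.log M := by
        intro a b c h1 h2 h3
        have hmem : Real.exp (p a - p b - p c) ≤ M := hM.2 ⟨a, b, c, h1, h2, h3, rfl⟩
        exact (Real.le_log_iff_exp_le hM0).mpr hmem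
      have hkey : ∀ N t s r : ℕ, t + s + r ≤ N → t ≤ s + r →
          p t - p s - p r ≤ Real.log M := by
        intro N
        induction N with
        | zero =>
          intro t s r hN hts
          obtain ⟨rfl, rfl, rfl⟩ : t = 0 ∧ s = 0 ∧ r = 0 := by omega
          apply hbox <;> · simp only [Nat.cast_zero]; linarith
        | succ N ih =>
          intro t s r hN hts
          by_cases hbx : (t:ℝ) ≤ 4*K ∧ (s:ℝ) ≤ 4*K ∧ (r:ℝ) ≤ 4*K
          · exact hbox t s r hbx.1 hbx.2.1 hbx.2.2
          · by_cases hs1 : 4*K < (s:ℝ) ∧ t < s + r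
            · have hs0 : 1 ≤ s := by
                rcases Nat.eq_zero_or_pos s with rfl | h
                · exfalso; rw [Nat.cast_zero] at hs1; linarith [hs1.1]
                · exact h
              have hih := ih t (s-1) r (by omega) (by omega)
              have hcast1 : ((s-1:ℕ):ℝ) = (s:ℝ) - 1 := by push_cast [hs0]; ring
              have hle : p ((s:ℝ) - 1) ≤ p (s:ℝ) :=
                hmono' _ _ (by linarith [hs1.1]) (by linarith)
              rw [hcast1] at hih
              linarith
            by_cases hr1 : 4*K < (r:ℝ) ∧ t < s + r
            · have hr0 : 1 ≤ r := by
                rcases Nat.eq_zero_or_pos r with rfl | h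
                · exfalso; rw [Nat.cast_zero] at hr1; linarith [hr1.1]
                · exact h
              have hih := ih t s (r-1) (by omega) (by omega)
              have hcast1 : ((r-1:ℕ):ℝ) = (r:ℝ) - 1 := by push_cast [hr0]; ring
              have hle : p ((r:ℝ) - 1) ≤ p (r:ℝ) :=
                hmono' _ _ (by linarith [hr1.1]) (by linarith)
              rw [hcast1] at hih
              linarith
            have ht4 : 4*K < (t:ℝ) := by
              by_contra hc; push_neg at hc
              have h1 : ¬((s:ℝ) ≤ 4*K) ∨ ¬((r:ℝ) ≤ 4*K) := by tauto
              have hts' : t = s + r := by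
                by_contra hne
                have hlt : t < s + r := lt_of_le_of_ne hts hne
                rcases h1 with h | h
                · exact hs1 ⟨lt_of_not_ge h, hlt⟩
                · exact hr1 ⟨lt_of_not_ge h, hlt⟩
              rcases h1 with h | h
              · have h2 : 4*K < (s:ℝ) := lt_of_not_ge h
                have h3 : (s:ℝ) ≤ (t:ℝ) := by exact_mod_cast (by omega : s ≤ t)
                linarith
              · have h2 : 4*K < (r:ℝ) := lt_of_not_ge h
                have h3 : (r:ℝ) ≤ (t:ℝ) := by exact_mod_cast (by omega : r ≤ t)
                linarith
            have ht1 : 1 ≤ t := by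
              rcases Nat.eq_zero_or_pos t with rfl | h
              · exfalso; rw [Nat.cast_zero] at ht4; linarith
              · exact h
            have hcast : (t:ℝ) ≤ (s:ℝ) + (r:ℝ) := by exact_mod_cast hts
            rcases le_total s r with hsr | hsr
            · -- r is the max
              have hcsr : (s:ℝ) ≤ (r:ℝ) := by exact_mod_cast hsr
              have h2K : 2*K < (r:ℝ) := by linarith
              have hr0 : 1 ≤ r := by
                rcases Nat.eq_zero_or_pos r with rfl | h
                · exfalso; rw [Nat.cast_zero] at h2K; linarith
                · exact h
              have hrt : r ≤ t := by
                by_cases he : t < s + r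
                · have h5 : ¬(4*K < (r:ℝ)) := fun hh => hr1 ⟨hh, he⟩
                  push_neg at h5
                  have h6 : (r:ℝ) < (t:ℝ) := lt_of_le_of_lt h5 ht4
                  exact_mod_cast h6.le
                · omega
              have hih := ih (t-1) s (r-1) (by omega) (by omega)
              have hc1 : ((t-1:ℕ):ℝ) = (t:ℝ) - 1 := by push_cast [ht1]; ring
              have hc2 : ((r-1:ℕ):ℝ) = (r:ℝ) - 1 := by push_cast [hr0]; ring
              have hcrt : (r:ℝ) ≤ (t:ℝ) := by exact_mod_cast hrt
              have hstep := hincr ((r:ℝ)-1) ((t:ℝ)-1) (by linarith) (by linarith)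
              rw [show (t:ℝ)-1+1 = (t:ℝ) by ring, show (r:ℝ)-1+1 = (r:ℝ) by ring] at hstep
              rw [hc1, hc2] at hih
              linarith
            · -- s is the max
              have hcsr : (r:ℝ) ≤ (s:ℝ) := by exact_mod_cast hsr
              have h2K : 2*K < (s:ℝ) := by linarith
              have hs0 : 1 ≤ s := by
                rcases Nat.eq_zero_or_pos s with rfl | h
                · exfalso; rw [Nat.cast_zero] at h2K; linarith
                · exact h
              have hst : s ≤ t := by
                by_cases he : t < s + r
                · have h5 : ¬(4*K < (s:ℝ)) := fun hh => hs1 ⟨hh, he⟩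
                  push_neg at h5
                  have h6 : (s:ℝ) < (t:ℝ) := lt_of_le_of_lt h5 ht4
                  exact_mod_cast h6.le
                · omega
              have hih := ih (t-1) (s-1) r (by omega) (by omega)
              have hc1 : ((t-1:ℕ):ℝ) = (t:ℝ) - 1 := by push_cast [ht1]; ring
              have hc2 : ((s-1:ℕ):ℝ) = (s:ℝ) - 1 := by push_cast [hs0]; ring
              have hcst : (s:ℝ) ≤ (t:ℝ) := by exact_mod_cast hst
              have hstep := hincr ((s:ℝ)-1) ((t:ℝ)-1) (by linarith) (by linarith)
              rw [show (t:ℝ)-1+1 = (t:ℝ) by ring, show (s:ℝ)-1+1 = (s:ℝ) by ring] at hstep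
              rw [hc1, hc2] at hih
              linarith
      intro t s r hts
      exact hkey (t+s+r) t s r le_rfl hts
  intro x y
  have h := hfinal (τ (x*y)) (τ x) (τ y) (hsub x y)
  rw [hω, hω, hω]
  have hexp : Real.exp (p (τ (x*y)) - p (τ x) - p (τ y)) ≤ M :=
    (Real.le_log_iff_exp_le hM0).mp h
  have e1 : Real.exp (p ((τ (x*y) : ℕ):ℝ))
      = Real.exp (p (τ (x*y)) - p (τ x) - p (τ y)) * Real.exp (p (τ x)) * Real.exp (p (τ y)) := by
    rw [← Real.exp_add, ← Real.exp_add]; ring_nf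
  rw [e1]
  have h1 := Real.exp_pos (p ((τ x : ℕ):ℝ))
  have h2 := Real.exp_pos (p ((τ y : ℕ):ℝ))
  exact mul_le_mul_of_nonneg_right (mul_le_mul_of_nonneg_right hexp h1.le) h2.le
end

section
/- Let G be a group, ω : G → (0,∞) a weight (ω(xy) ≤ ω(x)ω(y)), and suppose there exist nonnegative functions u, v : G → [0,∞) with Σ_{x∈G} u(x)² < ∞ and Σ_{y∈G} v(y)² < ∞ such that ω(xy)/(ω(x)ω(y)) ≤ u(x) + v(y) for all x, y ∈ G. Then the function Ω(x,y) = ω(xy)/(ω(x)ω(y)) can be written as Ω = f₁ + f₂ where sup_y Σ_x |f₁(x,y)|² < ∞ and sup_x Σ_y |f₂(x,y)|² < ∞. -/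
theorem stmt_17 {G : Type*} [Group G]
    (ω : G → ℝ) (hωpos : ∀ x, 0 < ω x)
    (hω : ∀ x y, ω (x * y) ≤ ω x * ω y)
    (u v : G → ℝ) (hu0 : ∀ x, 0 ≤ u x) (hv0 : ∀ y, 0 ≤ v y)
    (hu : Summable fun x => u x ^ 2) (hv : Summable fun y => v y ^ 2)
    (hbound : ∀ x y, ω (x * y) / (ω x * ω y) ≤ u x + v y) :
    ∃ f₁ f₂ : G → G → ℝ,
      (∀ x y, ω (x * y) / (ω x * ω y) = f₁ x y + f₂ x y) ∧
      (∃ C₁ : ℝ, ∀ y, Summable (fun x => |f₁ x y| ^ 2) ∧ ∑' x, |f₁ x y| ^ 2 ≤ C₁) ∧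
      (∃ C₂ : ℝ, ∀ x, Summable (fun y => |f₂ x y| ^ 2) ∧ ∑' y, |f₂ x y| ^ 2 ≤ C₂) := by
  set Ω : G → G → ℝ := fun x y => ω (x * y) / (ω x * ω y) with hΩ
  have hΩpos : ∀ x y, 0 < Ω x y := fun x y =>
    div_pos (hωpos _) (mul_pos (hωpos x) (hωpos y))
  have hden : ∀ x y, 0 < u x + v y := fun x y =>
    lt_of_lt_of_le (hΩpos x y) (hbound x y)
  refine ⟨fun x y => Ω x y * u x / (u x + v y),
          fun x y => Ω x y * v y / (u x + v y), ?_, ?_, ?_⟩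
  · intro x y
    rw [← add_div, ← mul_add, mul_div_assoc,
      div_self (hden x y).ne', mul_one]
  · refine ⟨∑' x, u x ^ 2, fun y => ?_⟩
    have hb : ∀ x, |Ω x y * u x / (u x + v y)| ^ 2 ≤ u x ^ 2 := by
      intro x
      have h1 : 0 ≤ Ω x y * u x / (u x + v y) :=
        div_nonneg (mul_nonneg (hΩpos x y).le (hu0 x)) (hden x y).le
      rw [abs_of_nonneg h1]
      have h2 : Ω x y * u x / (u x + v y) ≤ u x := by
        rw [div_le_iff₀ (hden x y)]
        calc Ω x y * u x ≤ (u x + v y) * u x :=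
              mul_le_mul_of_nonneg_right (hbound x y) (hu0 x)
          _ = u x * (u x + v y) := by ring
      exact pow_le_pow_left₀ h1 h2 2
    have hs : Summable fun x => |Ω x y * u x / (u x + v y)| ^ 2 :=
      Summable.of_nonneg_of_le (fun x => by positivity) hb hu
    exact ⟨hs, Summable.tsum_le_tsum hb hs hu⟩
  · refine ⟨∑' y, v y ^ 2, fun x => ?_⟩
    have hb : ∀ y, |Ω x y * v y / (u x + v y)| ^ 2 ≤ v y ^ 2 := by
      intro y
      have h1 : 0 ≤ Ω x y * v y / (u x + v y) :=
        div_nonneg (mul_nonneg (hΩpos x y).le (hv0 y)) (hden x y).le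
      rw [abs_of_nonneg h1]
      have h2 : Ω x y * v y / (u x + v y) ≤ v y := by
        rw [div_le_iff₀ (hden x y)]
        calc Ω x y * v y ≤ (u x + v y) * v y :=
              mul_le_mul_of_nonneg_right (hbound x y) (hv0 y)
          _ = v y * (u x + v y) := by ring
      exact pow_le_pow_left₀ h1 h2 2
    have hs : Summable fun y => |Ω x y * v y / (u x + v y)| ^ 2 :=
      Summable.of_nonneg_of_le (fun y => by positivity) hb hv
    exact ⟨hs, Summable.tsum_le_tsum hb hs hv⟩
end
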